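/- Under the permutation missingness model, define ζ(y) = P(R₂=1 | R₁=1, Y¹=y), α(x) = E(1/ζ(Y¹) | R₁=1, R₂=1, X¹=x), β(x) = E(Y¹/ζ(Y¹) | R₁=1, R₂=1, X¹=x), and θ = E( β(X¹)/α(X¹) | R₁=0, R₂=1 ). Then E(Y¹) = P(R₁=1) · E(Y¹ | R₁=1) + P(R₁=0) · θ, and moreover θ = E(Y¹ | R₁=0). -/

import Mathlib

open MeasureTheory

/-- `pr μ s` is the probability of the event `s`, as a real number. -/
noncomputable def pr {Ω : Type*} [MeasurableSpace Ω] (μ : Measure Ω) (s : Set Ω) : ℝ :=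
  (μ s).toReal

/-- `cpr μ s t` is the conditional probability of `s` given `t`, as a real number. -/
noncomputable def cpr {Ω : Type*} [MeasurableSpace Ω] (μ : Measure Ω) (s t : Set Ω) : ℝ :=
  pr μ (s ∩ t) / pr μ t

/-- `ζ(y) = P(R₂ = 1 | R₁ = 1, Y¹ = y)`. -/
noncomputable def zetaPM {Ω : Type*} [MeasurableSpace Ω] (μ : Measure Ω)
    (Y1 : Ω → ℝ) (R1 R2 : Ω → Bool) (y : ℝ) : ℝ :=
  cpr μ {ω | R2 ω = true} {ω | R1 ω = true ∧ Y1 ω = y}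

/-- `α(x) = E(1/ζ(Y¹) | R₁ = 1, R₂ = 1, X¹ = x)`, as a finite sum over the range `𝒴`. -/
noncomputable def alphaPM {Ω 𝒳 : Type*} [MeasurableSpace Ω] (μ : Measure Ω)
    (Y1 : Ω → ℝ) (X1 : Ω → 𝒳) (R1 R2 : Ω → Bool) (𝒴 : Finset ℝ) (x : 𝒳) : ℝ :=
  ∑ y ∈ 𝒴, (1 / zetaPM μ Y1 R1 R2 y) *
    cpr μ {ω | Y1 ω = y} {ω | R1 ω = true ∧ R2 ω = true ∧ X1 ω = x}

/-- `β(x) = E(Y¹/ζ(Y¹) | R₁ = 1, R₂ = 1, X¹ = x)`, as a finite sum over the range `𝒴`. -/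
noncomputable def betaPM {Ω 𝒳 : Type*} [MeasurableSpace Ω] (μ : Measure Ω)
    (Y1 : Ω → ℝ) (X1 : Ω → 𝒳) (R1 R2 : Ω → Bool) (𝒴 : Finset ℝ) (x : 𝒳) : ℝ :=
  ∑ y ∈ 𝒴, (y / zetaPM μ Y1 R1 R2 y) *
    cpr μ {ω | Y1 ω = y} {ω | R1 ω = true ∧ R2 ω = true ∧ X1 ω = x}

/-- `θ = E(β(X¹)/α(X¹) | R₁ = 0, R₂ = 1)`, as a finite sum over `𝒳`. -/
noncomputable def thetaPM {Ω 𝒳 : Type*} [MeasurableSpace Ω] [Fintype 𝒳] (μ : Measure Ω)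
    (Y1 : Ω → ℝ) (X1 : Ω → 𝒳) (R1 R2 : Ω → Bool) (𝒴 : Finset ℝ) : ℝ :=
  ∑ x : 𝒳, (betaPM μ Y1 X1 R1 R2 𝒴 x / alphaPM μ Y1 X1 R1 R2 𝒴 x) *
    cpr μ {ω | X1 ω = x} {ω | R1 ω = false ∧ R2 ω = true}


set_option linter.unusedSectionVars false

section PMHelpers
variable {Ω : Type*} [MeasurableSpace Ω] (μ : Measure Ω) [IsFiniteMeasure μ]

lemma pr_nonneg' (s : Set Ω) : 0 ≤ pr μ s := ENNReal.toReal_nonneg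

lemma pr_congr' {s t : Set Ω} (h : ∀ ω, ω ∈ s ↔ ω ∈ t) : pr μ s = pr μ t := by
  rw [Set.ext h]

lemma pr_mono' {s t : Set Ω} (h : s ⊆ t) : pr μ s ≤ pr μ t :=
  ENNReal.toReal_mono (measure_ne_top μ t) (measure_mono h)

lemma cpr_mul' {s t : Set Ω} (h : pr μ t ≠ 0) : cpr μ s t * pr μ t = pr μ (s ∩ t) :=
  div_mul_cancel₀ _ h

lemma pr_partition' {ι : Type*} [MeasurableSpace ι] [MeasurableSingletonClass ι]
    (s : Finset ι) (g : Ω → ι) (hg : Measurable g) (hr : ∀ ω, g ω ∈ s)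
    {t : Set Ω} (ht : MeasurableSet t) :
    pr μ t = ∑ i ∈ s, pr μ ({ω | g ω = i} ∩ t) := by
  have h1 : t = ⋃ i ∈ s, ({ω | g ω = i} ∩ t) := by
    ext ω
    simp only [Set.mem_iUnion, Set.mem_inter_iff, Set.mem_setOf_eq]
    exact ⟨fun h => ⟨g ω, hr ω, rfl, h⟩, fun ⟨i, _, _, h⟩ => h⟩
  have hdisj : (s : Set ι).PairwiseDisjoint (fun i => {ω | g ω = i} ∩ t) := by
    intro i _ j _ hij
    refine Set.disjoint_left.2 fun ω hi hj => hij ?_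
    rw [← hi.1, ← hj.1]
  have hmeas : ∀ i ∈ s, MeasurableSet ({ω | g ω = i} ∩ t) := fun i _ =>
    (hg (measurableSet_singleton i)).inter ht
  have h2 := measure_biUnion_finset (μ := μ) hdisj hmeas
  rw [← h1] at h2
  simp only [pr, h2, ENNReal.toReal_sum (fun i (_ : i ∈ s) => measure_ne_top μ ({ω | g ω = i} ∩ t))]

end PMHelpers

/-- **`θ` identifies `E(Y¹ | R₁ = 0)` in the permutation missingness model.**
With `ζ, α, β, θ` as above, one has
`E(Y¹) = P(R₁=1) E(Y¹ | R₁=1) + P(R₁=0) θ` and moreover `θ = E(Y¹ | R₁=0)`,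
all expectations being finite sums over the range `𝒴`. -/
theorem stmt6
    {Ω : Type*} [MeasurableSpace Ω] (μ : Measure Ω) [IsProbabilityMeasure μ]
    {𝒳 : Type*} [Fintype 𝒳] [MeasurableSpace 𝒳] [MeasurableSingletonClass 𝒳]
    (Y1 : Ω → ℝ) (X1 : Ω → 𝒳) (R1 R2 : Ω → Bool)
    (hY1m : Measurable Y1) (hX1m : Measurable X1) (hR1m : Measurable R1)
    (hR2m : Measurable R2)
    (𝒴 : Finset ℝ) (hrange : ∀ ω, Y1 ω ∈ 𝒴)
    (hCI1 : ∀ x : 𝒳, 0 < pr μ {ω | X1 ω = x} → ∀ (r : Bool) (y : ℝ),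
      cpr μ {ω | R1 ω = r ∧ Y1 ω = y} {ω | X1 ω = x} =
        cpr μ {ω | R1 ω = r} {ω | X1 ω = x} * cpr μ {ω | Y1 ω = y} {ω | X1 ω = x})
    (hCI2a : ∀ y : ℝ, 0 < pr μ {ω | R1 ω = true ∧ Y1 ω = y} → ∀ (r : Bool) (x : 𝒳),
      cpr μ {ω | R2 ω = r ∧ X1 ω = x} {ω | R1 ω = true ∧ Y1 ω = y} =
        cpr μ {ω | R2 ω = r} {ω | R1 ω = true ∧ Y1 ω = y} *
          cpr μ {ω | X1 ω = x} {ω | R1 ω = true ∧ Y1 ω = y})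
    (hCI2b : ∀ (r : Bool) (y : ℝ) (x : 𝒳),
      cpr μ {ω | R2 ω = r ∧ Y1 ω = y ∧ X1 ω = x} {ω | R1 ω = false} =
        cpr μ {ω | R2 ω = r} {ω | R1 ω = false} *
          cpr μ {ω | Y1 ω = y ∧ X1 ω = x} {ω | R1 ω = false})
    (hpos1 : ∀ x : 𝒳, ∀ y ∈ 𝒴,
      0 < pr μ {ω | R1 ω = true ∧ R2 ω = true ∧ Y1 ω = y ∧ X1 ω = x})
    (hpos2 : 0 < pr μ {ω | R1 ω = false ∧ R2 ω = true}) :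
    (∑ y ∈ 𝒴, y * pr μ {ω | Y1 ω = y}) =
        pr μ {ω | R1 ω = true} * (∑ y ∈ 𝒴, y * cpr μ {ω | Y1 ω = y} {ω | R1 ω = true}) +
          pr μ {ω | R1 ω = false} * thetaPM μ Y1 X1 R1 R2 𝒴 ∧
      thetaPM μ Y1 X1 R1 R2 𝒴 = ∑ y ∈ 𝒴, y * cpr μ {ω | Y1 ω = y} {ω | R1 ω = false} := by
  classical
  have hΩ : Nonempty Ω := by
    by_contra h
    rw [not_nonempty_iff] at h
    have h1 : (μ Set.univ) = 1 := measure_univ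
    rw [Set.univ_eq_empty_iff.2 h] at h1
    simp at h1
  obtain ⟨ω₀⟩ := hΩ
  have hy₀ : Y1 ω₀ ∈ 𝒴 := hrange ω₀
  have mY : ∀ y : ℝ, MeasurableSet {ω | Y1 ω = y} := fun y => hY1m (measurableSet_singleton y)
  have mX : ∀ x : 𝒳, MeasurableSet {ω | X1 ω = x} := fun x => hX1m (measurableSet_singleton x)
  have mR1 : ∀ r : Bool, MeasurableSet {ω | R1 ω = r} := fun r => hR1m (measurableSet_singleton r)
  have mR2 : ∀ r : Bool, MeasurableSet {ω | R2 ω = r} := fun r => hR2m (measurableSet_singleton r)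
  -- positivity facts
  have he : ∀ y ∈ 𝒴, (0:ℝ) < pr μ {ω | R1 ω = true ∧ Y1 ω = y} := fun y hy =>
    lt_of_lt_of_le (hpos1 (X1 ω₀) y hy) (pr_mono' μ (fun ω h => ⟨h.1, h.2.2.1⟩))
  have hn1 : 0 < pr μ {ω | R1 ω = true} :=
    lt_of_lt_of_le (hpos1 (X1 ω₀) _ hy₀) (pr_mono' μ fun ω h => h.1)
  have hn0 : 0 < pr μ {ω | R1 ω = false} :=
    lt_of_lt_of_le hpos2 (pr_mono' μ fun ω h => h.1)
  have hp : ∀ x, 0 < pr μ {ω | X1 ω = x} := fun x =>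
    lt_of_lt_of_le (hpos1 x _ hy₀) (pr_mono' μ fun ω h => h.2.2.2)
  have hb : ∀ x, 0 < pr μ {ω | R1 ω = true ∧ X1 ω = x} := fun x =>
    lt_of_lt_of_le (hpos1 x _ hy₀) (pr_mono' μ fun ω h => ⟨h.1, h.2.2.2⟩)
  have ha : ∀ x, 0 < pr μ {ω | R1 ω = true ∧ R2 ω = true ∧ X1 ω = x} := fun x =>
    lt_of_lt_of_le (hpos1 x _ hy₀) (pr_mono' μ fun ω h => ⟨h.1, h.2.1, h.2.2.2⟩)
  have hz : ∀ y ∈ 𝒴, 0 < zetaPM μ Y1 R1 R2 y := by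
    intro y hy
    have h1 : 0 < pr μ ({ω | R2 ω = true} ∩ {ω | R1 ω = true ∧ Y1 ω = y}) :=
      lt_of_lt_of_le (hpos1 (X1 ω₀) y hy) (pr_mono' μ fun ω h => ⟨h.2.1, h.1, h.2.2.1⟩)
    exact div_pos h1 (he y hy)
  -- Step 1 : g = ζ · q
  have hg : ∀ y ∈ 𝒴, ∀ x, pr μ {ω | R1 ω = true ∧ R2 ω = true ∧ Y1 ω = y ∧ X1 ω = x}
      = zetaPM μ Y1 R1 R2 y * pr μ {ω | R1 ω = true ∧ Y1 ω = y ∧ X1 ω = x} := by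
    intro y hy x
    have hene := (he y hy).ne'
    have h1 := hCI2a y (he y hy) true x
    calc pr μ {ω | R1 ω = true ∧ R2 ω = true ∧ Y1 ω = y ∧ X1 ω = x}
        = cpr μ {ω | R2 ω = true ∧ X1 ω = x} {ω | R1 ω = true ∧ Y1 ω = y}
            * pr μ {ω | R1 ω = true ∧ Y1 ω = y} := by
          rw [cpr_mul' μ hene]
          exact pr_congr' μ (fun ω => by
            simp only [Set.mem_inter_iff, Set.mem_setOf_eq]; try tauto)
      _ = zetaPM μ Y1 R1 R2 y * (cpr μ {ω | X1 ω = x} {ω | R1 ω = true ∧ Y1 ω = y}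
            * pr μ {ω | R1 ω = true ∧ Y1 ω = y}) := by rw [h1]; simp only [zetaPM]; ring
      _ = zetaPM μ Y1 R1 R2 y * pr μ {ω | R1 ω = true ∧ Y1 ω = y ∧ X1 ω = x} := by
          rw [cpr_mul' μ hene]
          congr 1
          exact pr_congr' μ (fun ω => by
            simp only [Set.mem_inter_iff, Set.mem_setOf_eq]; try tauto)
  -- partitions over y
  have hay : ∀ x, pr μ {ω | R1 ω = true ∧ R2 ω = true ∧ X1 ω = x}
      = ∑ y ∈ 𝒴, pr μ {ω | R1 ω = true ∧ R2 ω = true ∧ Y1 ω = y ∧ X1 ω = x} := by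
    intro x
    rw [pr_partition' μ 𝒴 Y1 hY1m hrange (t := {ω | R1 ω = true ∧ R2 ω = true ∧ X1 ω = x})
      ((mR1 true).inter ((mR2 true).inter (mX x)))]
    exact Finset.sum_congr rfl fun y _ => pr_congr' μ (fun ω => by
      simp only [Set.mem_inter_iff, Set.mem_setOf_eq]; try tauto)
  have hby : ∀ x, pr μ {ω | R1 ω = true ∧ X1 ω = x}
      = ∑ y ∈ 𝒴, pr μ {ω | R1 ω = true ∧ Y1 ω = y ∧ X1 ω = x} := by
    intro x
    rw [pr_partition' μ 𝒴 Y1 hY1m hrange (t := {ω | R1 ω = true ∧ X1 ω = x})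
      ((mR1 true).inter (mX x))]
    exact Finset.sum_congr rfl fun y _ => pr_congr' μ (fun ω => by
      simp only [Set.mem_inter_iff, Set.mem_setOf_eq]; try tauto)
  have hb0y : ∀ x, pr μ {ω | R1 ω = false ∧ X1 ω = x}
      = ∑ y ∈ 𝒴, pr μ {ω | R1 ω = false ∧ Y1 ω = y ∧ X1 ω = x} := by
    intro x
    rw [pr_partition' μ 𝒴 Y1 hY1m hrange (t := {ω | R1 ω = false ∧ X1 ω = x})
      ((mR1 false).inter (mX x))]
    exact Finset.sum_congr rfl fun y _ => pr_congr' μ (fun ω => by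
      simp only [Set.mem_inter_iff, Set.mem_setOf_eq]; try tauto)
  -- hCI1 consequences
  have hq : ∀ y ∈ 𝒴, ∀ x,
      pr μ {ω | R1 ω = true ∧ Y1 ω = y ∧ X1 ω = x} * pr μ {ω | X1 ω = x}
      = pr μ {ω | R1 ω = true ∧ X1 ω = x} * pr μ {ω | Y1 ω = y ∧ X1 ω = x} := by
    intro y hy x
    have h1 := hCI1 x (hp x) true y
    have e1 : pr μ ({ω | R1 ω = true ∧ Y1 ω = y} ∩ {ω | X1 ω = x})
        = pr μ {ω | R1 ω = true ∧ Y1 ω = y ∧ X1 ω = x} := pr_congr' μ (fun ω => by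
      simp only [Set.mem_inter_iff, Set.mem_setOf_eq]; try tauto)
    have e2 : pr μ ({ω | R1 ω = true} ∩ {ω | X1 ω = x})
        = pr μ {ω | R1 ω = true ∧ X1 ω = x} := pr_congr' μ (fun ω => by
      simp only [Set.mem_inter_iff, Set.mem_setOf_eq]; try tauto)
    have e3 : pr μ ({ω | Y1 ω = y} ∩ {ω | X1 ω = x})
        = pr μ {ω | Y1 ω = y ∧ X1 ω = x} := pr_congr' μ (fun ω => by
      simp only [Set.mem_inter_iff, Set.mem_setOf_eq]; try tauto)
    simp only [cpr, e1, e2, e3] at h1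
    have hpx := (hp x).ne'
    field_simp at h1
    apply mul_right_cancel₀ hpx
    linear_combination pr μ {ω | X1 ω = x} * h1
  have hq0 : ∀ y ∈ 𝒴, ∀ x,
      pr μ {ω | R1 ω = false ∧ Y1 ω = y ∧ X1 ω = x} * pr μ {ω | X1 ω = x}
      = pr μ {ω | R1 ω = false ∧ X1 ω = x} * pr μ {ω | Y1 ω = y ∧ X1 ω = x} := by
    intro y hy x
    have h1 := hCI1 x (hp x) false y
    have e1 : pr μ ({ω | R1 ω = false ∧ Y1 ω = y} ∩ {ω | X1 ω = x})
        = pr μ {ω | R1 ω = false ∧ Y1 ω = y ∧ X1 ω = x} := pr_congr' μ (fun ω => by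
      simp only [Set.mem_inter_iff, Set.mem_setOf_eq]; try tauto)
    have e2 : pr μ ({ω | R1 ω = false} ∩ {ω | X1 ω = x})
        = pr μ {ω | R1 ω = false ∧ X1 ω = x} := pr_congr' μ (fun ω => by
      simp only [Set.mem_inter_iff, Set.mem_setOf_eq]; try tauto)
    have e3 : pr μ ({ω | Y1 ω = y} ∩ {ω | X1 ω = x})
        = pr μ {ω | Y1 ω = y ∧ X1 ω = x} := pr_congr' μ (fun ω => by
      simp only [Set.mem_inter_iff, Set.mem_setOf_eq]; try tauto)
    simp only [cpr, e1, e2, e3] at h1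
    have hpx := (hp x).ne'
    field_simp at h1
    apply mul_right_cancel₀ hpx
    linear_combination pr μ {ω | X1 ω = x} * h1
  -- hCI2b consequence : g0 · n0 = c · q0
  have hg0 : ∀ (y : ℝ) (x : 𝒳),
      pr μ {ω | R1 ω = false ∧ R2 ω = true ∧ Y1 ω = y ∧ X1 ω = x} * pr μ {ω | R1 ω = false}
      = pr μ {ω | R1 ω = false ∧ R2 ω = true}
          * pr μ {ω | R1 ω = false ∧ Y1 ω = y ∧ X1 ω = x} := by
    intro y x
    have h1 := hCI2b true y x
    have e1 : pr μ ({ω | R2 ω = true ∧ Y1 ω = y ∧ X1 ω = x} ∩ {ω | R1 ω = false})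
        = pr μ {ω | R1 ω = false ∧ R2 ω = true ∧ Y1 ω = y ∧ X1 ω = x} := pr_congr' μ (fun ω => by
      simp only [Set.mem_inter_iff, Set.mem_setOf_eq]; try tauto)
    have e2 : pr μ ({ω | R2 ω = true} ∩ {ω | R1 ω = false})
        = pr μ {ω | R1 ω = false ∧ R2 ω = true} := pr_congr' μ (fun ω => by
      simp only [Set.mem_inter_iff, Set.mem_setOf_eq]; try tauto)
    have e3 : pr μ ({ω | Y1 ω = y ∧ X1 ω = x} ∩ {ω | R1 ω = false})
        = pr μ {ω | R1 ω = false ∧ Y1 ω = y ∧ X1 ω = x} := pr_congr' μ (fun ω => by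
      simp only [Set.mem_inter_iff, Set.mem_setOf_eq]; try tauto)
    simp only [cpr, e1, e2, e3] at h1
    have hn0' := hn0.ne'
    field_simp at h1
    apply mul_right_cancel₀ hn0'
    linear_combination pr μ {ω | R1 ω = false} * h1
    -- α and β closed forms
  have hcy : ∀ (x : 𝒳) (y : ℝ), cpr μ {ω | Y1 ω = y} {ω | R1 ω = true ∧ R2 ω = true ∧ X1 ω = x}
      = pr μ {ω | R1 ω = true ∧ R2 ω = true ∧ Y1 ω = y ∧ X1 ω = x}
        / pr μ {ω | R1 ω = true ∧ R2 ω = true ∧ X1 ω = x} := by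
    intro x y
    simp only [cpr]
    congr 1
    exact pr_congr' μ (fun ω => by simp only [Set.mem_inter_iff, Set.mem_setOf_eq]; try tauto)
  have hα : ∀ x, alphaPM μ Y1 X1 R1 R2 𝒴 x
      = pr μ {ω | R1 ω = true ∧ X1 ω = x} / pr μ {ω | R1 ω = true ∧ R2 ω = true ∧ X1 ω = x} := by
    intro x
    simp only [alphaPM]
    rw [hby x, Finset.sum_div]
    refine Finset.sum_congr rfl fun y hy => ?_
    rw [hcy x y, hg y hy x]
    have := (hz y hy).ne'
    field_simp
  have hβ : ∀ x, betaPM μ Y1 X1 R1 R2 𝒴 x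
      = (∑ y ∈ 𝒴, y * pr μ {ω | R1 ω = true ∧ Y1 ω = y ∧ X1 ω = x})
        / pr μ {ω | R1 ω = true ∧ R2 ω = true ∧ X1 ω = x} := by
    intro x
    simp only [betaPM]
    rw [Finset.sum_div]
    refine Finset.sum_congr rfl fun y hy => ?_
    rw [hcy x y, hg y hy x]
    have hzne := (hz y hy).ne'
    calc y / zetaPM μ Y1 R1 R2 y * (zetaPM μ Y1 R1 R2 y
          * pr μ {ω | R1 ω = true ∧ Y1 ω = y ∧ X1 ω = x}
          / pr μ {ω | R1 ω = true ∧ R2 ω = true ∧ X1 ω = x})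
        = (y * pr μ {ω | R1 ω = true ∧ Y1 ω = y ∧ X1 ω = x}
            / pr μ {ω | R1 ω = true ∧ R2 ω = true ∧ X1 ω = x})
            * (zetaPM μ Y1 R1 R2 y / zetaPM μ Y1 R1 R2 y) := by ring
      _ = y * pr μ {ω | R1 ω = true ∧ Y1 ω = y ∧ X1 ω = x}
            / pr μ {ω | R1 ω = true ∧ R2 ω = true ∧ X1 ω = x} := by
          rw [div_self hzne, mul_one]
  -- weight identity
  have hw : ∀ x, cpr μ {ω | X1 ω = x} {ω | R1 ω = false ∧ R2 ω = true}
      = pr μ {ω | R1 ω = false ∧ X1 ω = x} / pr μ {ω | R1 ω = false} := by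
    intro x
    have hnum : pr μ ({ω | X1 ω = x} ∩ {ω | R1 ω = false ∧ R2 ω = true})
        = ∑ y ∈ 𝒴, pr μ {ω | R1 ω = false ∧ R2 ω = true ∧ Y1 ω = y ∧ X1 ω = x} := by
      rw [pr_congr' μ (s := {ω | X1 ω = x} ∩ {ω | R1 ω = false ∧ R2 ω = true})
        (t := {ω | R1 ω = false ∧ R2 ω = true ∧ X1 ω = x}) (fun ω => by
          simp only [Set.mem_inter_iff, Set.mem_setOf_eq]; try tauto)]
      rw [pr_partition' μ 𝒴 Y1 hY1m hrange (t := {ω | R1 ω = false ∧ R2 ω = true ∧ X1 ω = x})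
        ((mR1 false).inter ((mR2 true).inter (mX x)))]
      exact Finset.sum_congr rfl fun y _ => pr_congr' μ (fun ω => by
        simp only [Set.mem_inter_iff, Set.mem_setOf_eq]; try tauto)
    have hnum2 : pr μ ({ω | X1 ω = x} ∩ {ω | R1 ω = false ∧ R2 ω = true})
        = pr μ {ω | R1 ω = false ∧ R2 ω = true} * pr μ {ω | R1 ω = false ∧ X1 ω = x}
          / pr μ {ω | R1 ω = false} := by
      rw [hnum, hb0y x, Finset.mul_sum, Finset.sum_div]
      refine Finset.sum_congr rfl fun y hy => ?_
      rw [eq_div_iff hn0.ne']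
      exact hg0 y x
    simp only [cpr]
    rw [hnum2]
    field_simp
  -- cross identity
  have hcross : ∀ x, (∑ y ∈ 𝒴, y * pr μ {ω | R1 ω = true ∧ Y1 ω = y ∧ X1 ω = x})
      * pr μ {ω | R1 ω = false ∧ X1 ω = x}
      = pr μ {ω | R1 ω = true ∧ X1 ω = x}
        * ∑ y ∈ 𝒴, y * pr μ {ω | R1 ω = false ∧ Y1 ω = y ∧ X1 ω = x} := by
    intro x
    have hsum : (∑ y ∈ 𝒴, y * pr μ {ω | R1 ω = true ∧ Y1 ω = y ∧ X1 ω = x})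
        * (pr μ {ω | R1 ω = false ∧ X1 ω = x} * pr μ {ω | X1 ω = x})
        = (∑ y ∈ 𝒴, y * pr μ {ω | R1 ω = false ∧ Y1 ω = y ∧ X1 ω = x})
          * (pr μ {ω | R1 ω = true ∧ X1 ω = x} * pr μ {ω | X1 ω = x}) := by
      rw [Finset.sum_mul, Finset.sum_mul]
      refine Finset.sum_congr rfl fun y hy => ?_
      linear_combination (y * pr μ {ω | R1 ω = false ∧ X1 ω = x}) * hq y hy x
        - (y * pr μ {ω | R1 ω = true ∧ X1 ω = x}) * hq0 y hy x
    apply mul_right_cancel₀ (hp x).ne'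
    linear_combination hsum
  -- θ identity
  have hθ : thetaPM μ Y1 X1 R1 R2 𝒴
      = ∑ y ∈ 𝒴, y * cpr μ {ω | Y1 ω = y} {ω | R1 ω = false} := by
    have hterm : ∀ x : 𝒳,
        betaPM μ Y1 X1 R1 R2 𝒴 x / alphaPM μ Y1 X1 R1 R2 𝒴 x
          * cpr μ {ω | X1 ω = x} {ω | R1 ω = false ∧ R2 ω = true}
        = (∑ y ∈ 𝒴, y * pr μ {ω | R1 ω = false ∧ Y1 ω = y ∧ X1 ω = x})
            / pr μ {ω | R1 ω = false} := by
      intro x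
      rw [hβ x, hα x, hw x]
      have ha' := (ha x).ne'
      have hb' := (hb x).ne'
      have h0' := hn0.ne'
      field_simp
      linear_combination hcross x
    simp only [thetaPM]
    rw [Finset.sum_congr rfl (fun x _ => hterm x), ← Finset.sum_div]
    have hswap : (∑ x : 𝒳, ∑ y ∈ 𝒴, y * pr μ {ω | R1 ω = false ∧ Y1 ω = y ∧ X1 ω = x})
        = ∑ y ∈ 𝒴, y * pr μ ({ω | Y1 ω = y} ∩ {ω | R1 ω = false}) := by
      rw [Finset.sum_comm]
      refine Finset.sum_congr rfl fun y hy => ?_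
      rw [← Finset.mul_sum]
      congr 1
      rw [pr_partition' μ Finset.univ X1 hX1m (fun ω => Finset.mem_univ _)
        (t := {ω | Y1 ω = y} ∩ {ω | R1 ω = false}) ((mY y).inter (mR1 false))]
      exact Finset.sum_congr rfl fun x _ => pr_congr' μ (fun ω => by
        simp only [Set.mem_inter_iff, Set.mem_setOf_eq]; try tauto)
    rw [hswap, Finset.sum_div]
    refine Finset.sum_congr rfl fun y hy => ?_
    simp only [cpr]
    rw [mul_div_assoc]
  refine ⟨?_, hθ⟩
  rw [hθ, Finset.mul_sum, Finset.mul_sum, ← Finset.sum_add_distrib]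
  refine Finset.sum_congr rfl fun y hy => ?_
  have hsplit : pr μ {ω | Y1 ω = y}
      = pr μ ({ω | R1 ω = true} ∩ {ω | Y1 ω = y})
        + pr μ ({ω | R1 ω = false} ∩ {ω | Y1 ω = y}) := by
    rw [pr_partition' μ Finset.univ R1 hR1m (fun ω => Finset.mem_univ _)
      (t := {ω | Y1 ω = y}) (mY y)]
    exact Fintype.sum_bool _
  have h1 : cpr μ {ω | Y1 ω = y} {ω | R1 ω = true} * pr μ {ω | R1 ω = true}
      = pr μ ({ω | R1 ω = true} ∩ {ω | Y1 ω = y}) := by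
    rw [cpr_mul' μ hn1.ne']
    exact pr_congr' μ (fun ω => by simp only [Set.mem_inter_iff, Set.mem_setOf_eq]; try tauto)
  have h2 : cpr μ {ω | Y1 ω = y} {ω | R1 ω = false} * pr μ {ω | R1 ω = false}
      = pr μ ({ω | R1 ω = false} ∩ {ω | Y1 ω = y}) := by
    rw [cpr_mul' μ hn0.ne']
    exact pr_congr' μ (fun ω => by simp only [Set.mem_inter_iff, Set.mem_setOf_eq]; try tauto)
  rw [hsplit]
  linear_combination (-y) * h1 + (-y) * h2
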